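/- For all n ≥ 0 and any q, the coefficient of u^n in the formal power series (1-qu^2)/((1+u)^2(1-qu)) equals (-1)^n(n+1) + Σ_{i=0}^{n-1} (-1)^i (2i+1) q^{n-i}. -/

import Mathlib

open PowerSeries

noncomputable def Fser (q : ℚ) : ℚ⟦X⟧ :=
  PowerSeries.mk fun n => (-1) ^ n * ((n : ℚ) + 1) +
      ∑ i ∈ Finset.range n, (-1) ^ i * (2 * (i : ℚ) + 1) * q ^ (n - i)

noncomputable def Hser (q : ℚ) : ℚ⟦X⟧ :=
  PowerSeries.mk fun n => if n = 0 then 1 else (-1) ^ n * ((n : ℚ) + 1 + q * (1 - n))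

noncomputable def Eser (q : ℚ) : ℚ⟦X⟧ :=
  PowerSeries.mk fun n => if n = 0 then 1 else if n = 1 then -1 else (-1) ^ n * (1 - q)

theorem step1 (q : ℚ) : (1 - PowerSeries.C (R := ℚ) q * X) * Fser q = Hser q := by
  ext n
  rw [sub_mul, one_mul, map_sub]
  cases n with
  | zero => simp [Fser, Hser, mul_comm, PowerSeries.coeff_zero_eq_constantCoeff]
  | succ n =>
      rw [mul_comm (PowerSeries.C (R := ℚ) q) X, mul_assoc, coeff_succ_X_mul, coeff_C_mul]
      simp only [Fser, Hser, coeff_mk, Nat.succ_ne_zero, if_false]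
      rw [Finset.sum_range_succ]
      have h1 : ∀ i ∈ Finset.range n,
          (-1:ℚ) ^ i * (2 * (i : ℚ) + 1) * q ^ (n + 1 - i)
            = q * ((-1:ℚ) ^ i * (2 * (i : ℚ) + 1) * q ^ (n - i)) := by
        intro i hi
        rw [Finset.mem_range] at hi
        have : n + 1 - i = (n - i) + 1 := by omega
        rw [this, pow_succ]
        ring
      rw [Finset.sum_congr rfl h1, ← Finset.mul_sum]
      have hx : n + 1 - n = 1 := by omega
      rw [hx]
      push_cast
      ring

theorem step2 (q : ℚ) : (1 + X) * Hser q = Eser q := by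
  ext n
  rw [add_mul, one_mul, map_add]
  cases n with
  | zero => simp [Hser, Eser, PowerSeries.coeff_zero_eq_constantCoeff]
  | succ n =>
      rw [coeff_succ_X_mul]
      simp only [Hser, Eser, coeff_mk, Nat.succ_ne_zero, if_false]
      cases n with
      | zero => norm_num
      | succ m =>
          simp only [Nat.succ_ne_zero, if_false, Nat.succ.injEq]
          push_cast
          ring

theorem step3 (q : ℚ) : (1 + X) * Eser q = 1 - PowerSeries.C (R := ℚ) q * X ^ 2 := by
  ext n
  rw [add_mul, one_mul, map_add]
  cases n with
  | zero => simp [Eser, PowerSeries.coeff_zero_eq_constantCoeff]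
  | succ n =>
      rw [coeff_succ_X_mul, map_sub, coeff_C_mul, coeff_X_pow, coeff_one,
        if_neg (Nat.succ_ne_zero n)]
      simp only [Eser, coeff_mk, Nat.succ_ne_zero, if_false]
      cases n with
      | zero => norm_num
      | succ m =>
        simp only [Nat.succ_ne_zero, if_false]
        cases m with
        | zero => norm_num; ring
        | succ k =>
          rw [if_neg (by omega : k + 1 + 1 + 1 ≠ 1), if_neg (by omega : k + 1 + 1 + 1 ≠ 2)]
          push_cast
          ring

theorem coeff_symplectic_series (q : ℚ) (n : ℕ) :
    (PowerSeries.coeff (R := ℚ) n)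
      ((1 - PowerSeries.C (R := ℚ) q * X ^ 2) *
        ((1 + X) ^ 2 * (1 - PowerSeries.C (R := ℚ) q * X))⁻¹) =
    (-1) ^ n * ((n : ℚ) + 1) +
      ∑ i ∈ Finset.range n, (-1) ^ i * (2 * (i : ℚ) + 1) * q ^ (n - i) := by
  have hc : constantCoeff (R := ℚ) ((1 + X) ^ 2 * (1 - PowerSeries.C (R := ℚ) q * X)) ≠ 0 := by
    simp [map_mul, map_pow, map_sub, map_add, constantCoeff_X, constantCoeff_C]
  have key : Fser q * ((1 + X) ^ 2 * (1 - PowerSeries.C (R := ℚ) q * X))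
      = 1 - PowerSeries.C (R := ℚ) q * X ^ 2 := by
    have : (1 + X) ^ 2 * (1 - PowerSeries.C (R := ℚ) q * X) * Fser q
        = 1 - PowerSeries.C (R := ℚ) q * X ^ 2 := by
      rw [mul_assoc, step1, sq, mul_assoc, step2, step3]
    rw [mul_comm]; exact this
  have : Fser q = (1 - PowerSeries.C (R := ℚ) q * X ^ 2) *
      ((1 + X) ^ 2 * (1 - PowerSeries.C (R := ℚ) q * X))⁻¹ :=
    (PowerSeries.eq_mul_inv_iff_mul_eq hc).mpr key
  rw [← this, Fser, coeff_mk]
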